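/- (Stochastic Gronwall, polynomial growth.) Let (X_t) be an adapted process on a filtered probability space satisfying X_{t+1} = X_t + α X_t^p + ξ_{t+1} + Z_{t+1}, X₀ = x₀ > 0, where p > 1 and α > 0 are fixed, (ξ_t) is adapted, and (Z_t) is a martingale difference sequence. Let (x̂_t) be the deterministic sequence defined by x̂_{t+1} = x̂_t + α x̂_t^p, x̂₀ = x₀/2. Fix T ∈ ℕ and δ ∈ (0,1). Suppose there exist Ξ, σ > 0 and δ_ξ ∈ (0,1) such that for every t, on the event { X_s ≥ x̂_s for all s ≤ t }: P( |ξ_{t+1}| > Ξ | F_t ) ≤ δ_ξ and E[Z_{t+1}² | F_t] ≤ σ². If Ξ ≤ x₀/(4T) and σ² ≤ x₀² δ/(16T), then with probability at least 1 − T δ_ξ − δ, X_t ≥ x̂_t for all t ≤ T. -/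

import Mathlib

open MeasureTheory
open scoped ENNReal NNReal

noncomputable section


private lemma aux_int_mul {Ω : Type*} {m0 : MeasurableSpace Ω} {μ : Measure Ω} {f g : Ω → ℝ}
    (hf : MemLp f 2 μ) (hg : MemLp g 2 μ) : Integrable (fun ω => f ω * g ω) μ := by
  refine Integrable.mono' ((hf.integrable_sq.add hg.integrable_sq).const_mul (1/2 : ℝ))
    (hf.aestronglyMeasurable.mul hg.aestronglyMeasurable) ?_
  filter_upwards with ω
  simp only [Pi.add_apply]
  rw [Real.norm_eq_abs, abs_mul]
  nlinarith [sq_nonneg (|f ω| - |g ω|), sq_abs (f ω), sq_abs (g ω), abs_nonneg (f ω),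
    abs_nonneg (g ω), mul_nonneg (abs_nonneg (f ω)) (abs_nonneg (g ω))]

set_option maxHeartbeats 1000000 in
set_option maxHeartbeats 1000000 in
/-- stochastic Gronwall lemma, polynomial growth.
Let `X_{t+1} = X_t + α X_t^p + ξ_{t+1} + Z_{t+1}` with `X₀ = x₀ > 0`, `p > 1`, `α > 0`,
`(ξ_t)` adapted and `(Z_t)` a martingale difference sequence, and let `x̂` solve
`x̂_{t+1} = x̂_t + α x̂_t^p`, `x̂₀ = x₀/2`. Assume that on the event
`{X_s ≥ x̂_s for all s ≤ t}` the conditional probability that `|ξ_{t+1}| > Ξ` is at most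
`δ_ξ` and the conditional variance of `Z_{t+1}` is at most `σ²`. If `Ξ ≤ x₀/(4T)` and
`σ² ≤ x₀² δ/(16T)`, then with probability at least `1 − T δ_ξ − δ`, `X_t ≥ x̂_t` for all
`t ≤ T`. -/
theorem stochastic_gronwall_polynomial {Ω : Type*} {m0 : MeasurableSpace Ω}
    (μ : Measure Ω) [IsProbabilityMeasure μ] (F : Filtration ℕ m0)
    (p α x₀ : ℝ) (hp : 1 < p) (hα : 0 < α) (hx₀ : 0 < x₀)
    (X ξ Z : ℕ → Ω → ℝ)
    (hXadapted : Adapted F X) (hξadapted : Adapted F ξ) (hZadapted : Adapted F Z)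
    (hZL2 : ∀ t, MemLp (Z t) 2 μ)
    (hmds : ∀ t, μ[Z (t + 1)|F t] =ᵐ[μ] 0)
    (hX0 : ∀ ω, X 0 ω = x₀)
    (hrec : ∀ t ω, X (t + 1) ω = X t ω + α * X t ω ^ p + ξ (t + 1) ω + Z (t + 1) ω)
    (xhat : ℕ → ℝ) (hxhat0 : xhat 0 = x₀ / 2)
    (hxhatrec : ∀ t, xhat (t + 1) = xhat t + α * xhat t ^ p)
    (T : ℕ) (δ : ℝ) (hδ : δ ∈ Set.Ioo (0 : ℝ) 1)
    (δξ : ℝ) (hδξ : δξ ∈ Set.Ioo (0 : ℝ) 1)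
    (Ξ σ : ℝ) (hΞ : 0 < Ξ) (hσ : 0 < σ)
    (hξbound : ∀ t, ∀ᵐ ω ∂μ,
      (∀ s ≤ t, xhat s ≤ X s ω) →
      (μ[Set.indicator {ω' | Ξ < |ξ (t + 1) ω'|} (fun _ => (1 : ℝ))|F t]) ω ≤ δξ)
    (hvar : ∀ t, ∀ᵐ ω ∂μ,
      (∀ s ≤ t, xhat s ≤ X s ω) →
      (μ[fun ω' => (Z (t + 1) ω') ^ 2|F t]) ω ≤ σ ^ 2)
    (hΞle : Ξ ≤ x₀ / (4 * T)) (hσle : σ ^ 2 ≤ x₀ ^ 2 * δ / (16 * T)) :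
    ENNReal.ofReal (1 - T * δξ - δ)
      ≤ μ {ω | ∀ t ≤ T, xhat t ≤ X t ω} := by
  -- T = 0 is impossible
  rcases Nat.eq_zero_or_pos T with hT0 | hTpos
  · subst hT0; simp at hΞle; linarith
  have hTR : (0:ℝ) < T := by exact_mod_cast hTpos
  have hTΞ : (T:ℝ) * Ξ ≤ x₀ / 4 := by
    calc (T:ℝ) * Ξ ≤ (T:ℝ) * (x₀ / (4 * T)) := mul_le_mul_of_nonneg_left hΞle hTR.le
      _ = x₀ / 4 := by field_simp
  have hTσ : (T:ℝ) * σ ^ 2 ≤ x₀ ^ 2 * δ / 16 := by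
    calc (T:ℝ) * σ ^ 2 ≤ (T:ℝ) * (x₀ ^ 2 * δ / (16 * T)) :=
          mul_le_mul_of_nonneg_left hσle hTR.le
      _ = x₀ ^ 2 * δ / 16 := by field_simp
  -- the good events
  set G : ℕ → Set Ω := fun t => {ω | ∀ s ≤ t, xhat s ≤ X s ω} with hG
  have hGmeas : ∀ t, MeasurableSet[F t] (G t) := by
    intro t
    have : G t = ⋂ s, ⋂ (_ : s ≤ t), {ω | xhat s ≤ X s ω} := by
      ext ω; simp [hG, Set.mem_iInter]
    rw [this]
    refine MeasurableSet.iInter fun s => MeasurableSet.iInter fun hs => ?_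
    exact measurableSet_le measurable_const
      (((hXadapted s).mono (F.mono hs) le_rfl))
  have hGanti : ∀ s t, s ≤ t → G t ⊆ G s := fun s t hst ω hω u hu => hω u (hu.trans hst)
  -- stopped martingale increments and the martingale
  set W : ℕ → Ω → ℝ := fun t => (G t).indicator (Z (t + 1)) with hW
  set M : ℕ → Ω → ℝ := fun t ω => ∑ s ∈ Finset.range t, W s ω with hM
  have hWmem : ∀ t, MemLp (W t) 2 μ := fun t =>
    (hZL2 (t + 1)).indicator (F.le t _ (hGmeas t))
  have hWint : ∀ t, Integrable (W t) μ := fun t => (hWmem t).integrable one_le_two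
  have hWsm : ∀ t, StronglyMeasurable[F (t + 1)] (W t) := fun t =>
    StronglyMeasurable.indicator ((hZadapted (t + 1)).stronglyMeasurable)
      (F.mono (Nat.le_succ t) _ (hGmeas t))
  have hMmem : ∀ t, MemLp (M t) 2 μ := fun t =>
    memLp_finsetSum (Finset.range t) (fun s _ => hWmem s)
  have hMint : ∀ t, Integrable (M t) μ := fun t => (hMmem t).integrable one_le_two
  have hMsm : ∀ t, StronglyMeasurable[F t] (M t) := by
    intro t
    refine Finset.stronglyMeasurable_fun_sum (Finset.range t) fun s hs => ?_
    exact (hWsm s).mono (F.mono (Finset.mem_range.mp hs))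
  have hWcond : ∀ t, μ[W t|F t] =ᵐ[μ] 0 := by
    intro t
    refine (condExp_indicator ((hZL2 (t+1)).integrable one_le_two) (hGmeas t)).trans ?_
    filter_upwards [hmds t] with ω hω
    simp [Set.indicator_apply, hω]
  -- cross terms vanish
  have hMWint : ∀ t, Integrable (fun ω => M t ω * W t ω) μ := fun t =>
    aux_int_mul (hMmem t) (hWmem t)
  have hMmulcond : ∀ t, (fun ω => M t ω * (μ[W t|F t]) ω) =ᵐ[μ] 0 := by
    intro t
    filter_upwards [hWcond t] with ω hω
    simp [hω]
  have hcondMW : ∀ t, μ[fun ω => M t ω * W t ω|F t] =ᵐ[μ] 0 := by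
    intro t
    refine (condExp_mul_of_stronglyMeasurable_left (hMsm t) (hMWint t) (hWint t)).trans ?_
    exact hMmulcond t
  have hcross : ∀ t, ∫ ω, M t ω * W t ω ∂μ = 0 := by
    intro t
    rw [← integral_condExp (F.le t) (f := fun ω => M t ω * W t ω),
      integral_congr_ae (hcondMW t)]
    simp
  -- second moment of increments
  have hW2 : ∀ t, ∫ ω, W t ω ^ 2 ∂μ ≤ σ ^ 2 := by
    intro t
    have hsq : (fun ω => W t ω ^ 2) = (G t).indicator (fun ω => Z (t + 1) ω ^ 2) := by
      funext ω
      by_cases h : ω ∈ G t <;> simp [hW, Set.indicator_apply, h]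
    have hZ2int : Integrable (fun ω => Z (t + 1) ω ^ 2) μ := (hZL2 (t + 1)).integrable_sq
    rw [hsq, ← integral_condExp (F.le t) (f := (G t).indicator fun ω => Z (t + 1) ω ^ 2)]
    have h1 : μ[(G t).indicator (fun ω => Z (t + 1) ω ^ 2)|F t]
        =ᵐ[μ] (G t).indicator (μ[fun ω => Z (t + 1) ω ^ 2|F t]) :=
      condExp_indicator hZ2int (hGmeas t)
    rw [integral_congr_ae h1]
    have h2 : (G t).indicator (μ[fun ω => Z (t + 1) ω ^ 2|F t]) ≤ᵐ[μ] fun _ => σ ^ 2 := by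
      have hnn : 0 ≤ᵐ[μ] μ[fun ω => Z (t + 1) ω ^ 2|F t] :=
        condExp_nonneg (Filter.Eventually.of_forall fun ω => sq_nonneg _)
      filter_upwards [hvar t, hnn] with ω hω hnnω
      by_cases h : ω ∈ G t
      · simpa [Set.indicator_of_mem h] using hω h
      · simp only [Set.indicator_of_notMem h]
        positivity
    calc ∫ ω, (G t).indicator (μ[fun ω => Z (t + 1) ω ^ 2|F t]) ω ∂μ
        ≤ ∫ _, σ ^ 2 ∂μ := by
          refine integral_mono_ae (integrable_condExp.indicator (F.le t _ (hGmeas t)))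
            (integrable_const _) h2
      _ = σ ^ 2 := by simp
  -- second moment of the martingale
  have hMsucc : ∀ t ω, M (t + 1) ω = M t ω + W t ω := by
    intro t ω
    simp [hM, Finset.sum_range_succ]
  have hM2 : ∀ t, ∫ ω, M t ω ^ 2 ∂μ ≤ t * σ ^ 2 := by
    intro t
    induction t with
    | zero => simp [hM]
    | succ t ih =>
      have hexp : (fun ω => M (t + 1) ω ^ 2)
          = fun ω => M t ω ^ 2 + (2 * (M t ω * W t ω) + W t ω ^ 2) := by
        funext ω; rw [hMsucc t ω]; ring
      have i1 : Integrable (fun ω => M t ω ^ 2) μ := (hMmem t).integrable_sq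
      have i2 : Integrable (fun ω => W t ω ^ 2) μ := (hWmem t).integrable_sq
      have i3 : Integrable (fun ω => 2 * (M t ω * W t ω)) μ := (hMWint t).const_mul 2
      have i4 : Integrable (fun ω => 2 * (M t ω * W t ω) + W t ω ^ 2) μ := i3.add i2
      rw [hexp, integral_add i1 i4, integral_add i3 i2, integral_const_mul, hcross t]
      push_cast
      have := hW2 t
      linarith
  -- M² is a submartingale
  have hsubm : Submartingale (fun t ω => M t ω ^ 2) F μ := by
    refine submartingale_nat (fun t => ?_) (fun t => (hMmem t).integrable_sq) (fun i => ?_)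
    · have : (fun ω => M t ω ^ 2) = fun ω => M t ω * M t ω := by funext ω; ring
      rw [this]; exact (hMsm t).mul (hMsm t)
    · have hpt : ∀ ω, M i ω ^ 2 + 2 * (M i ω * W i ω) ≤ M (i + 1) ω ^ 2 := by
        intro ω; rw [hMsucc i ω]; nlinarith [sq_nonneg (W i ω)]
      have i1 : Integrable (fun ω => M i ω ^ 2) μ := (hMmem i).integrable_sq
      have i3 : Integrable (fun ω => 2 * (M i ω * W i ω)) μ := (hMWint i).const_mul 2
      have hmono := condExp_mono (m := F i) (i1.add i3) ((hMmem (i + 1)).integrable_sq)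
        (Filter.Eventually.of_forall fun ω => hpt ω)
      have heq1 : μ[fun ω => M i ω ^ 2|F i] =ᵐ[μ] fun ω => M i ω ^ 2 := by
        refine Filter.EventuallyEq.of_eq (condExp_of_stronglyMeasurable (F.le i) ?_ i1)
        have : (fun ω => M i ω ^ 2) = fun ω => M i ω * M i ω := by funext ω; ring
        rw [this]; exact (hMsm i).mul (hMsm i)
      have heq2 : μ[fun ω => 2 * (M i ω * W i ω)|F i] =ᵐ[μ] fun _ => 0 := by
        have hsm2 : StronglyMeasurable[F i] (fun ω => 2 * M i ω) :=
          stronglyMeasurable_const.mul (hMsm i)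
        have harg : (fun ω => 2 * (M i ω * W i ω)) = (fun ω => 2 * M i ω) * W i := by
          funext ω; simp [Pi.mul_apply]; ring
        have hint2 : Integrable ((fun ω => 2 * M i ω) * W i) μ :=
          harg ▸ ((hMWint i).const_mul 2)
        have h := condExp_mul_of_stronglyMeasurable_left hsm2 hint2 (hWint i)
        rw [harg]
        refine h.trans ?_
        filter_upwards [hWcond i] with ω hω
        simp [hω]
      refine Filter.EventuallyLE.trans ?_ hmono
      have hadd : μ[(fun ω => M i ω ^ 2) + fun ω => 2 * (M i ω * W i ω)|F i]
          =ᵐ[μ] μ[fun ω => M i ω ^ 2|F i] + μ[fun ω => 2 * (M i ω * W i ω)|F i] :=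
        condExp_add i1 i3 _
      have : (fun ω => M i ω ^ 2) ≤ᵐ[μ]
          μ[(fun ω => M i ω ^ 2) + fun ω => 2 * (M i ω * W i ω)|F i] := by
        filter_upwards [hadd, heq1, heq2] with ω h1 h2 h3
        simp only [Pi.add_apply] at h1 ⊢
        rw [h1, h2, h3]; simp
      exact this
  -- Doob's inequality
  set ε : NNReal := (x₀ ^ 2 / 16).toNNReal with hε
  have hεpos : (0:ℝ) < x₀ ^ 2 / 16 := by positivity
  set Bad : Set Ω := {ω | (ε : ℝ) ≤ (Finset.range (T + 1)).sup'
    Finset.nonempty_range_add_one fun k => M k ω ^ 2} with hBadDef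
  have hdoob := maximal_ineq hsubm (fun t ω => sq_nonneg _) (ε := ε) T
  have hBad : μ Bad ≤ ENNReal.ofReal δ := by
    have hsetint : (∫ ω in Bad, M T ω ^ 2 ∂μ) ≤ ∫ ω, M T ω ^ 2 ∂μ :=
      setIntegral_le_integral (hMmem T).integrable_sq
        (Filter.Eventually.of_forall fun ω => sq_nonneg _)
    have h1 : (ε : ℝ≥0∞) * μ Bad ≤ ENNReal.ofReal (x₀ ^ 2 / 16 * δ) := by
      refine le_trans (le_of_eq (ENNReal.smul_def ε (μ Bad)).symm) (le_trans hdoob ?_)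
      refine ENNReal.ofReal_le_ofReal (hsetint.trans ((hM2 T).trans (by linarith)))
    have hcoe : (ε : ℝ≥0∞) = ENNReal.ofReal (x₀ ^ 2 / 16) := rfl
    rw [ENNReal.ofReal_mul hεpos.le, ← hcoe] at h1
    have hεne : (ε : ℝ≥0∞) ≠ 0 := by
      rw [hcoe]; simp [ENNReal.ofReal_eq_zero, not_le, hεpos]
    exact (ENNReal.mul_le_mul_iff_right hεne ENNReal.coe_ne_top).mp h1
  -- bad events for ξ
  have hSmeas : ∀ t, MeasurableSet {ω | Ξ < |ξ (t + 1) ω|} := by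
    intro t
    have hm : Measurable (ξ (t + 1)) := (hξadapted (t + 1)).le (F.le (t + 1))
    exact measurableSet_lt measurable_const hm.abs
  have hA : ∀ t, μ (G t ∩ {ω | Ξ < |ξ (t + 1) ω|}) ≤ ENNReal.ofReal δξ := by
    intro t
    set I := Set.indicator {ω' | Ξ < |ξ (t + 1) ω'|} (fun _ => (1 : ℝ)) with hI
    have hIint : Integrable I μ := (integrable_const 1).indicator (hSmeas t)
    have hkey : (μ (G t ∩ {ω | Ξ < |ξ (t + 1) ω|})).toReal = ∫ ω, (G t).indicator I ω ∂μ := by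
      have harg : (G t).indicator I
          = (G t ∩ {ω | Ξ < |ξ (t + 1) ω|}).indicator (1 : Ω → ℝ) :=
        Set.indicator_indicator _ _ _
      rw [harg, integral_indicator_one ((F.le t _ (hGmeas t)).inter (hSmeas t))]; rfl
    have h2 : ∫ ω, (G t).indicator I ω ∂μ ≤ δξ := by
      rw [← integral_condExp (F.le t) (f := (G t).indicator I),
        integral_congr_ae (condExp_indicator hIint (hGmeas t))]
      have hle : (G t).indicator (μ[I|F t]) ≤ᵐ[μ] fun _ => δξ := by
        have hnn : (0:Ω → ℝ) ≤ᵐ[μ] μ[I|F t] :=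
          condExp_nonneg (Filter.Eventually.of_forall fun ω =>
            Set.indicator_nonneg (fun _ _ => zero_le_one) ω)
        filter_upwards [hξbound t, hnn] with ω h1 h2
        by_cases h : ω ∈ G t
        · rw [Set.indicator_of_mem h]; exact h1 h
        · rw [Set.indicator_of_notMem h]; exact hδξ.1.le
      calc ∫ ω, (G t).indicator (μ[I|F t]) ω ∂μ ≤ ∫ _, δξ ∂μ :=
            integral_mono_ae (integrable_condExp.indicator (F.le t _ (hGmeas t)))
              (integrable_const _) hle
        _ = δξ := by simp
    calc μ (G t ∩ {ω | Ξ < |ξ (t + 1) ω|})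
        = ENNReal.ofReal ((μ (G t ∩ {ω | Ξ < |ξ (t + 1) ω|})).toReal) :=
          (ENNReal.ofReal_toReal (measure_ne_top μ _)).symm
      _ ≤ ENNReal.ofReal δξ := ENNReal.ofReal_le_ofReal (by rw [hkey]; exact h2)
  have hUnion : μ (⋃ t ∈ Finset.range T, (G t ∩ {ω | Ξ < |ξ (t + 1) ω|}))
      ≤ ENNReal.ofReal (T * δξ) := by
    calc μ (⋃ t ∈ Finset.range T, (G t ∩ {ω | Ξ < |ξ (t + 1) ω|}))
        ≤ ∑ t ∈ Finset.range T, μ (G t ∩ {ω | Ξ < |ξ (t + 1) ω|}) :=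
          measure_biUnion_finset_le _ _
      _ ≤ ∑ _t ∈ Finset.range T, ENNReal.ofReal δξ := Finset.sum_le_sum fun t _ => hA t
      _ = T * ENNReal.ofReal δξ := by rw [Finset.sum_const, Finset.card_range, nsmul_eq_mul]
      _ = ENNReal.ofReal (T * δξ) := by
          rw [ENNReal.ofReal_mul (Nat.cast_nonneg T), ENNReal.ofReal_natCast]
  -- deterministic lower bound for xhat
  have hxhat_lb : ∀ t, x₀ / 2 ≤ xhat t := by
    intro t; induction t with
    | zero => rw [hxhat0]
    | succ t ih =>
      rw [hxhatrec t]
      have : 0 ≤ α * xhat t ^ p := mul_nonneg hα.le (Real.rpow_nonneg (by linarith) p)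
      linarith
  -- inclusion of the good event
  have hincl : (⋃ t ∈ Finset.range T, (G t ∩ {ω | Ξ < |ξ (t + 1) ω|}))ᶜ ∩ Badᶜ
      ⊆ {ω | ∀ t ≤ T, xhat t ≤ X t ω} := by
    rintro ω ⟨hωA, hωB⟩
    have hMb : ∀ k, k ≤ T → |M k ω| ≤ x₀ / 4 := by
      intro k hk
      have hsup : ¬ ((ε : ℝ) ≤ (Finset.range (T + 1)).sup'
          Finset.nonempty_range_add_one fun k => M k ω ^ 2) := hωB
      push_neg at hsup
      have hterm : M k ω ^ 2 < (ε : ℝ) :=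
        lt_of_le_of_lt
          (Finset.le_sup' (f := fun k => M k ω ^ 2)
            (Finset.mem_range.mpr (Nat.lt_succ_of_le hk))) hsup
      have hε' : (ε : ℝ) = x₀ ^ 2 / 16 := Real.coe_toNNReal _ hεpos.le
      rw [hε'] at hterm
      rw [abs_le]
      constructor <;> nlinarith [hterm, hx₀]
    have hξb : ∀ s, s < T → ω ∈ G s → |ξ (s + 1) ω| ≤ Ξ := by
      intro s hs hGs
      by_contra h
      push_neg at h
      exact hωA (Set.mem_biUnion (Finset.mem_range.mpr hs) ⟨hGs, h⟩)
    have main : ∀ t, t ≤ T → (ω ∈ G t ∧ x₀ / 2 - t * Ξ + M t ω ≤ X t ω - xhat t) := by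
      intro t
      induction t with
      | zero =>
        intro _
        constructor
        · intro s hs
          have hs0 : s = 0 := Nat.le_zero.mp hs
          subst hs0
          rw [hX0, hxhat0]; linarith
        · have hM0 : M 0 ω = 0 := by simp [hM]
          rw [hM0, hX0, hxhat0]
          push_cast
          linarith
      | succ t ih =>
        intro ht
        obtain ⟨hGt, hC⟩ := ih (le_trans (Nat.le_succ t) ht)
        have hXt : xhat t ≤ X t ω := hGt t le_rfl
        have hξs : |ξ (t + 1) ω| ≤ Ξ := hξb t (Nat.lt_of_succ_le ht) hGt
        have hWeq : W t ω = Z (t + 1) ω := Set.indicator_of_mem hGt _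
        have hrpow : xhat t ^ p ≤ X t ω ^ p :=
          Real.rpow_le_rpow (by linarith [hxhat_lb t]) hXt (by linarith)
        have habs := abs_le.mp hξs
        have hstep : x₀ / 2 - (t + 1 : ℕ) * Ξ + M (t + 1) ω ≤ X (t + 1) ω - xhat (t + 1) := by
          rw [hrec t ω, hxhatrec t, hMsucc t ω, hWeq]
          have h1 : 0 ≤ α * (X t ω ^ p - xhat t ^ p) := mul_nonneg hα.le (by linarith)
          push_cast
          linarith [hC, habs.1, h1]
        refine ⟨?_, hstep⟩
        intro s hs
        rcases Nat.lt_succ_iff_lt_or_eq.mp (Nat.lt_succ_of_le hs) with hlt | heq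
        · exact hGt s (Nat.lt_succ_iff.mp hlt)
        · subst heq
          have hMle := abs_le.mp (hMb (t + 1) ht)
          have hcast : ((t + 1 : ℕ) : ℝ) ≤ (T : ℝ) := Nat.cast_le.mpr ht
          have hmul : ((t + 1 : ℕ) : ℝ) * Ξ ≤ (T : ℝ) * Ξ :=
            mul_le_mul_of_nonneg_right hcast hΞ.le
          linarith [hstep, hMle.1, hTΞ, hmul]
    exact fun t ht => (main t ht).1 t le_rfl
  -- final measure arithmetic
  have hcompl : μ ({ω | ∀ t ≤ T, xhat t ≤ X t ω}ᶜ)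
      ≤ ENNReal.ofReal (T * δξ) + ENNReal.ofReal δ := by
    have hsub2 : {ω | ∀ t ≤ T, xhat t ≤ X t ω}ᶜ
        ⊆ (⋃ t ∈ Finset.range T, (G t ∩ {ω | Ξ < |ξ (t + 1) ω|})) ∪ Bad := by
      intro ω hω
      by_contra h
      rw [Set.mem_union, not_or] at h
      exact hω (hincl ⟨h.1, h.2⟩)
    calc μ ({ω | ∀ t ≤ T, xhat t ≤ X t ω}ᶜ)
        ≤ μ ((⋃ t ∈ Finset.range T, (G t ∩ {ω | Ξ < |ξ (t + 1) ω|})) ∪ Bad) :=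
          measure_mono hsub2
      _ ≤ μ (⋃ t ∈ Finset.range T, (G t ∩ {ω | Ξ < |ξ (t + 1) ω|})) + μ Bad :=
          measure_union_le _ _
      _ ≤ ENNReal.ofReal (T * δξ) + ENNReal.ofReal δ := add_le_add hUnion hBad
  have h1 : (1 : ℝ≥0∞) ≤ μ {ω | ∀ t ≤ T, xhat t ≤ X t ω}
      + (ENNReal.ofReal (T * δξ) + ENNReal.ofReal δ) := by
    calc (1 : ℝ≥0∞) = μ Set.univ := measure_univ.symm
      _ = μ ({ω | ∀ t ≤ T, xhat t ≤ X t ω} ∪ {ω | ∀ t ≤ T, xhat t ≤ X t ω}ᶜ) := by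
          rw [Set.union_compl_self]
      _ ≤ μ {ω | ∀ t ≤ T, xhat t ≤ X t ω} + μ ({ω | ∀ t ≤ T, xhat t ≤ X t ω}ᶜ) :=
          measure_union_le _ _
      _ ≤ _ := add_le_add le_rfl hcompl
  by_cases hpos : 0 < 1 - T * δξ - δ
  · have haux : ENNReal.ofReal (1 - T * δξ - δ) + (ENNReal.ofReal (T * δξ) + ENNReal.ofReal δ)
        = 1 := by
      have hTδ : (0:ℝ) ≤ T * δξ := mul_nonneg (Nat.cast_nonneg T) hδξ.1.le
      rw [← ENNReal.ofReal_add hTδ hδ.1.le,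
        ← ENNReal.ofReal_add (by linarith) (by linarith [hTδ, hδ.1]),
        show 1 - (T:ℝ) * δξ - δ + ((T:ℝ) * δξ + δ) = (1:ℝ) by ring, ENNReal.ofReal_one]
    rw [← haux] at h1
    exact (ENNReal.add_le_add_iff_right
      (ENNReal.add_ne_top.mpr ⟨ENNReal.ofReal_ne_top, ENNReal.ofReal_ne_top⟩)).mp h1
  · push_neg at hpos
    rw [ENNReal.ofReal_eq_zero.mpr hpos]
    exact zero_le


end
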